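/- For integers A, B, any odd prime p, and any positive integer n, the quantity (v_{pn}(A,B) − v_n(A,B))/(pn) is a p-adic integer. -/

import Mathlib

/-- Lucas sequence `u n (A, B)`: `u 0 = 0`, `u 1 = 1`, `u (n+2) = A * u (n+1) - B * u n`. -/
def lucasU (A B : ℤ) : ℕ → ℤ
  | 0 => 0
  | 1 => 1
  | n + 2 => A * lucasU A B (n + 1) - B * lucasU A B n

/-- Companion Lucas sequence `v n (A, B)`: `v 0 = 2`, `v 1 = A`, `v (n+2) = A * v (n+1) - B * v n`. -/
def lucasV (A B : ℤ) : ℕ → ℤ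
  | 0 => 2
  | 1 => A
  | n + 2 => A * lucasV A B (n + 1) - B * lucasV A B n

lemma lucasV_add (A B : ℤ) : ∀ m k, lucasV A B (k + m) * lucasV A B m
    = lucasV A B (k + m + m) + B ^ m * lucasV A B k
  | 0, k => by simp [lucasV]; ring
  | 1, k => by
      show lucasV A B (k + 1) * A = lucasV A B (k + 1 + 1) + B ^ 1 * lucasV A B k
      have h : lucasV A B (k + 2) = A * lucasV A B (k + 1) - B * lucasV A B k := rfl
      rw [show k + 1 + 1 = k + 2 from rfl, h]; ring
  | m + 2, k => by
      have h1 := lucasV_add A B (m + 1) (k + 1)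
      have h2 := lucasV_add A B m (k + 2)
      have e1 : lucasV A B (m + 2) = A * lucasV A B (m + 1) - B * lucasV A B m := rfl
      have e2 : lucasV A B (k + 2) = A * lucasV A B (k + 1) - B * lucasV A B k := rfl
      have e3 : lucasV A B (k + 2*m + 4) = A * lucasV A B (k + 2*m + 3) - B * lucasV A B (k + 2*m + 2) := rfl
      have i1 : k + 1 + (m + 1) = k + m + 2 := by ring
      have i2 : k + 1 + (m + 1) + (m + 1) = k + 2*m + 3 := by ring
      have i3 : k + 2 + m = k + m + 2 := by ring
      have i4 : k + 2 + m + m = k + 2*m + 2 := by ring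
      have i5 : k + (m+2) + (m+2) = k + 2*m + 4 := by ring
      rw [show k + 1 + (m + 1) + (m + 1) = k + 2*m + 3 by omega, show k + 1 + (m + 1) = k + m + 2 by omega] at h1
      rw [show k + 2 + m + m = k + 2*m + 2 by omega, show k + 2 + m = k + m + 2 by omega] at h2
      rw [show k + (m + 2) + (m + 2) = k + 2*m + 4 by omega, show k + (m + 2) = k + m + 2 by omega,
        e1, e3]
      linear_combination A * h1 - B * h2 - B^(m+1) * e2

lemma lucasV_comp (A B : ℤ) (m : ℕ) : ∀ k, lucasV A B (m * k) = lucasV (lucasV A B m) (B ^ m) k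
  | 0 => by simp [lucasV]
  | 1 => by simp [lucasV]
  | k + 2 => by
      have h := lucasV_add A B m (m * k)
      have e : lucasV (lucasV A B m) (B ^ m) (k + 2)
          = lucasV A B m * lucasV (lucasV A B m) (B ^ m) (k + 1)
            - B ^ m * lucasV (lucasV A B m) (B ^ m) k := rfl
      rw [e, ← lucasV_comp A B m (k + 1), ← lucasV_comp A B m k]
      rw [show m * k + m = m * (k + 1) by ring] at h
      rw [show m * (k + 1) + m = m * (k + 2) by ring] at h
      linear_combination -h

open MvPolynomial in
noncomputable def vPoly : ℕ → MvPolynomial (Fin 2) ℤ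
  | 0 => C 2
  | 1 => X 0
  | n + 2 => X 0 * vPoly (n + 1) - X 1 * vPoly n


open MvPolynomial in
lemma vPoly_eval (g : Fin 2 → ℤ) : ∀ n, eval g (vPoly n) = lucasV (g 0) (g 1) n
  | 0 => by simp [vPoly, lucasV]
  | 1 => by simp [vPoly, lucasV]
  | n + 2 => by
      show eval g (X 0 * vPoly (n + 1) - X 1 * vPoly n) = _
      rw [show lucasV (g 0) (g 1) (n + 2)
        = g 0 * lucasV (g 0) (g 1) (n + 1) - g 1 * lucasV (g 0) (g 1) n from rfl]
      simp [vPoly_eval g (n + 1), vPoly_eval g n]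

open MvPolynomial in
lemma vPoly_eval₂ {T : Type} [CommRing T] (α β : T) :
    ∀ n, eval₂ (Int.castRingHom T) (fun i => if i = 0 then α + β else α * β) (vPoly n)
      = α ^ n + β ^ n
  | 0 => by simp [vPoly]; norm_num
  | 1 => by simp [vPoly]
  | n + 2 => by
      show eval₂ _ _ (X 0 * vPoly (n + 1) - X 1 * vPoly n) = _
      rw [eval₂_sub, eval₂_mul, eval₂_mul, eval₂_X, eval₂_X,
        vPoly_eval₂ α β (n + 1), vPoly_eval₂ α β n]
      simp only [if_pos rfl]
      norm_num
      ring

open MvPolynomial Polynomial in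
lemma of_inj {R : Type} [CommRing R] [Nontrivial R] {g : R[X]} (hg : g.Monic)
    (hdeg : 1 ≤ g.degree) : Function.Injective (AdjoinRoot.of g) := by
  intro r s h
  have h2 : AdjoinRoot.modByMonicHom hg (AdjoinRoot.mk g (Polynomial.C r))
      = AdjoinRoot.modByMonicHom hg (AdjoinRoot.mk g (Polynomial.C s)) := by
    rw [show AdjoinRoot.mk g (Polynomial.C r) = AdjoinRoot.of g r from rfl,
      show AdjoinRoot.mk g (Polynomial.C s) = AdjoinRoot.of g s from rfl, h]
  rw [AdjoinRoot.modByMonicHom_mk, AdjoinRoot.modByMonicHom_mk,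
    (Polynomial.modByMonic_eq_self_iff hg).2, (Polynomial.modByMonic_eq_self_iff hg).2] at h2
  · exact Polynomial.C_injective h2
  · exact lt_of_le_of_lt (Polynomial.degree_C_le) (lt_of_lt_of_le (by norm_num) hdeg)
  · exact lt_of_le_of_lt (Polynomial.degree_C_le) (lt_of_lt_of_le (by norm_num) hdeg)


open MvPolynomial Polynomial in
lemma vPoly_map_zmod (p : ℕ) [Fact p.Prime]  :
    MvPolynomial.map (Int.castRingHom (ZMod p)) (vPoly p) = (MvPolynomial.X 0) ^ p := by
  set S₀ := MvPolynomial (Fin 2) (ZMod p)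
  set g : S₀[X] := Polynomial.X ^ 2 - Polynomial.C (MvPolynomial.X 0) * Polynomial.X
      + Polynomial.C (MvPolynomial.X 1) with hg
  have hmonic : g.Monic := by unfold g; monicity!
  have hdeg : 1 ≤ g.degree := by
    have : g.degree = 2 := by unfold g; compute_degree!
    rw [this]; norm_num
  set T := AdjoinRoot g
  set α : T := AdjoinRoot.root g
  set β : T := AdjoinRoot.of g (MvPolynomial.X 0) - α
  have hsum : α + β = AdjoinRoot.of g (MvPolynomial.X 0) := by ring
  have hroot := AdjoinRoot.eval₂_root g
  have hprod : α * β = AdjoinRoot.of g (MvPolynomial.X 1) := by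
    unfold g at hroot
    simp only [Polynomial.eval₂_add, Polynomial.eval₂_sub, Polynomial.eval₂_mul,
      Polynomial.eval₂_pow, Polynomial.eval₂_X, Polynomial.eval₂_C] at hroot
    unfold β
    linear_combination -hroot
  -- CharP T p
  have hCinj : Function.Injective (MvPolynomial.C : ZMod p → S₀) := MvPolynomial.C_injective _ _
  have hofinj : Function.Injective (AdjoinRoot.of g) := of_inj hmonic hdeg
  haveI : CharP T p := charP_of_injective_ringHom
    (show Function.Injective ((AdjoinRoot.of g).comp (MvPolynomial.C (σ := Fin 2))) from
      hofinj.comp hCinj) p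
  -- the two ring homs
  have key : ∀ q : MvPolynomial (Fin 2) ℤ,
      eval₂ (Int.castRingHom T) (fun i => AdjoinRoot.of g (MvPolynomial.X i)) q
        = AdjoinRoot.of g (MvPolynomial.map (Int.castRingHom (ZMod p)) q) := by
    intro q
    have : (MvPolynomial.eval₂Hom (Int.castRingHom T)
        (fun i => AdjoinRoot.of g (MvPolynomial.X i)))
        = (AdjoinRoot.of g).comp (MvPolynomial.map (Int.castRingHom (ZMod p))) := by
      apply MvPolynomial.ringHom_ext
      · intro a
        have h3 := map_intCast ((AdjoinRoot.of g).comp (MvPolynomial.C (σ := Fin 2))) a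
        simp only [RingHom.comp_apply] at h3
        simp [h3]
      · intro i
        rw [RingHom.comp_apply, MvPolynomial.map_X]
        simp
    exact congrFun (congrArg (fun f => f.toFun) this) q
  have h1 := vPoly_eval₂ α β p
  have heq : (fun i : Fin 2 => if i = 0 then α + β else α * β)
      = fun i => AdjoinRoot.of g (MvPolynomial.X i) := by
    funext i
    fin_cases i
    · simpa using hsum
    · simpa using hprod
  rw [heq, key] at h1
  have h2 : eval₂ (Int.castRingHom T) (fun i => AdjoinRoot.of g (MvPolynomial.X i))
      ((MvPolynomial.X 0 : MvPolynomial (Fin 2) ℤ) ^ p)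
      = α ^ p + β ^ p := by
    rw [MvPolynomial.eval₂_pow, MvPolynomial.eval₂_X, ← hsum, add_pow_char]
  rw [key] at h2
  apply hofinj
  rw [h1, ← h2]
  congr 1
  simp

open MvPolynomial in
lemma vPoly_decomp (p : ℕ) [Fact p.Prime]  : ∃ W : MvPolynomial (Fin 2) ℤ,
    vPoly p = X 0 ^ p + C (p : ℤ) * W := by
  have h : C (p : ℤ) ∣ vPoly p - X 0 ^ p := by
    rw [MvPolynomial.C_dvd_iff_dvd_coeff]
    intro i
    have h0 : MvPolynomial.map (Int.castRingHom (ZMod p)) (vPoly p - X 0 ^ p) = 0 := by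
      rw [map_sub, vPoly_map_zmod]
      simp
    have := congrArg (fun q => MvPolynomial.coeff i q) h0
    simp only [MvPolynomial.coeff_map, MvPolynomial.coeff_zero] at this
    exact_mod_cast (ZMod.intCast_zmod_eq_zero_iff_dvd _ p).1 this
  obtain ⟨W, hW⟩ := h
  exact ⟨W, by linear_combination hW⟩

-- evaluation congruence
open MvPolynomial in
lemma eval_congr (W : MvPolynomial (Fin 2) ℤ) (g g' : Fin 2 → ℤ) (M : ℕ)
    (h : ∀ i, (M : ℤ) ∣ g i - g' i) : (M : ℤ) ∣ eval g W - eval g' W := by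
  have hcast : ∀ i, ((g i : ZMod M)) = ((g' i : ZMod M)) := by
    intro i
    have := (ZMod.intCast_zmod_eq_zero_iff_dvd _ M).2 (h i)
    push_cast at this
    exact sub_eq_zero.1 this
  have hκ := MvPolynomial.eval₂_comp_left (Int.castRingHom (ZMod M)) (RingHom.id ℤ) g W
  have hκ' := MvPolynomial.eval₂_comp_left (Int.castRingHom (ZMod M)) (RingHom.id ℤ) g' W
  have he : eval g W = eval₂ (RingHom.id ℤ) g W := rfl
  have he' : eval g' W = eval₂ (RingHom.id ℤ) g' W := rfl
  have hfun : (Int.castRingHom (ZMod M)) ∘ g = (Int.castRingHom (ZMod M)) ∘ g' := by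
    funext i; exact hcast i
  rw [← (ZMod.intCast_zmod_eq_zero_iff_dvd _ M)]
  push_cast
  rw [sub_eq_zero, he, he']
  calc (↑(eval₂ (RingHom.id ℤ) g W) : ZMod M)
      = eval₂ ((Int.castRingHom (ZMod M)).comp (RingHom.id ℤ)) ((Int.castRingHom (ZMod M)) ∘ g) W := hκ
    _ = eval₂ ((Int.castRingHom (ZMod M)).comp (RingHom.id ℤ)) ((Int.castRingHom (ZMod M)) ∘ g') W := by rw [hfun]
    _ = ↑(eval₂ (RingHom.id ℤ) g' W) := hκ'.symm

lemma int_fermat (p : ℕ) [Fact p.Prime] (c : ℤ) : (p : ℤ) ∣ c ^ p - c := by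
  rw [← (ZMod.intCast_zmod_eq_zero_iff_dvd _ p)]
  push_cast
  rw [ZMod.pow_card, sub_self]

lemma pow_lift (p : ℕ) [Fact p.Prime] {x y : ℤ} {M : ℕ} (h1 : (p : ℤ) ∣ x - y) (hM : (p : ℤ) ^ M ∣ x - y) :
    (p : ℤ) ^ (M + 1) ∣ x ^ p - y ^ p := by
  have hgs := geom_sum₂_mul x y p
  have hS : (p : ℤ) ∣ ∑ i ∈ Finset.range p, x ^ i * y ^ (p - 1 - i) := by
    rw [← (ZMod.intCast_zmod_eq_zero_iff_dvd _ p)]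
    push_cast
    have hxy : (x : ZMod p) = (y : ZMod p) := by
      have := (ZMod.intCast_zmod_eq_zero_iff_dvd _ p).2 h1
      push_cast at this
      exact sub_eq_zero.1 this
    calc (∑ i ∈ Finset.range p, (x : ZMod p) ^ i * (y : ZMod p) ^ (p - 1 - i))
        = ∑ i ∈ Finset.range p, (y : ZMod p) ^ (p - 1) := by
          apply Finset.sum_congr rfl
          intro i hi
          rw [hxy, ← pow_add]
          congr 1
          have := Finset.mem_range.1 hi
          omega
      _ = (p : ZMod p) * (y : ZMod p) ^ (p - 1) := by
          rw [Finset.sum_const, Finset.card_range, nsmul_eq_mul]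
      _ = 0 := by rw [ZMod.natCast_self, zero_mul]
  rw [← hgs, pow_succ, mul_comm ((p:ℤ)^M)]
  exact mul_dvd_mul hS hM

open MvPolynomial in
lemma lucasV_p_decomp (p : ℕ) [Fact p.Prime] : ∃ W : MvPolynomial (Fin 2) ℤ, ∀ x y : ℤ,
    lucasV x y p = x ^ p + p * eval (fun i => if i = 0 then x else y) W := by
  obtain ⟨W, hW⟩ := vPoly_decomp p
  refine ⟨W, fun x y => ?_⟩
  have h := vPoly_eval (fun i : Fin 2 => if i = 0 then x else y) p
  norm_num at h
  rw [← h, hW]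
  simp

open MvPolynomial in
lemma lucasV_congr (p : ℕ) [Fact p.Prime] {x x' y y' : ℤ} {M : ℕ}
    (hx : (p : ℤ) ^ M ∣ x - x') (hy : (p : ℤ) ^ M ∣ y - y') (hM : 1 ≤ M) :
    (p : ℤ) ^ (M + 1) ∣ lucasV x y p - lucasV x' y' p := by
  obtain ⟨W, hW⟩ := lucasV_p_decomp p
  have hp1 : (p : ℤ) ∣ x - x' := dvd_trans (dvd_pow_self _ (by omega : M ≠ 0)) hx
  have h1 : (p : ℤ) ^ (M + 1) ∣ x ^ p - x' ^ p := pow_lift p hp1 hx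
  have hMnat : ((p ^ M : ℕ) : ℤ) = (p : ℤ) ^ M := by push_cast; ring
  have h2 : (p : ℤ) ^ M ∣ eval (fun i => if i = 0 then x else y) W
      - eval (fun i => if i = 0 then x' else y') W := by
    rw [← hMnat]
    apply eval_congr
    intro i
    rw [hMnat]
    fin_cases i <;> simp [hx, hy]
  rw [hW x y, hW x' y']
  have : x ^ p + ↑p * eval (fun i => if i = 0 then x else y) W
      - (x' ^ p + ↑p * eval (fun i => if i = 0 then x' else y') W)
      = (x ^ p - x' ^ p) + ↑p * (eval (fun i => if i = 0 then x else y) W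
        - eval (fun i => if i = 0 then x' else y') W) := by ring
  rw [this]
  apply dvd_add h1
  rw [pow_succ, mul_comm]
  exact mul_dvd_mul (dvd_refl _) h2


lemma D_congr (p : ℕ) [Fact p.Prime] (B : ℤ) (m : ℕ) : ∀ k, (p : ℤ) ^ (k + 1) ∣ B ^ (p ^ (k + 1) * m) - B ^ (p ^ k * m)
  | 0 => by
      have h := int_fermat p (B ^ m)
      rw [← pow_mul] at h
      rw [show p ^ (0 + 1) * m = m * p by ring, show p ^ 0 * m = m by ring]
      simpa using h
  | k + 1 => by
      have ih := D_congr p B m k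
      have h1 : (p : ℤ) ∣ B ^ (p ^ (k + 1) * m) - B ^ (p ^ k * m) :=
        dvd_trans (dvd_pow_self _ (by omega : k + 1 ≠ 0)) ih
      have := pow_lift p h1 ih
      rwa [show (B ^ (p ^ (k + 1) * m)) ^ p = B ^ (p ^ (k + 1 + 1) * m) by
          rw [← pow_mul]; congr 1; ring,
        show (B ^ (p ^ k * m)) ^ p = B ^ (p ^ (k + 1) * m) by
          rw [← pow_mul]; congr 1; ring] at this

open MvPolynomial in
lemma lucasV_main (p : ℕ) [Fact p.Prime] (A B : ℤ) (m : ℕ) :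
    ∀ k, (p : ℤ) ^ (k + 1) ∣ lucasV A B (p ^ (k + 1) * m) - lucasV A B (p ^ k * m)
  | 0 => by
      obtain ⟨W, hW⟩ := lucasV_p_decomp p
      have hcomp := lucasV_comp A B (p ^ 0 * m) p
      rw [show p ^ 0 * m * p = p ^ (0 + 1) * m by ring] at hcomp
      rw [hcomp, hW]
      simp only [pow_zero, one_mul, zero_add, pow_one]
      have h1 := int_fermat p (lucasV A B (p ^ 0 * m))
      rw [pow_zero, one_mul] at h1
      have : lucasV A B m ^ p + ↑p * eval (fun i => if i = 0 then lucasV A B m else B ^ m) W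
          - lucasV A B m = (lucasV A B m ^ p - lucasV A B m)
          + ↑p * eval (fun i => if i = 0 then lucasV A B m else B ^ m) W := by ring
      rw [this]
      exact dvd_add (by simpa using h1) (Dvd.intro _ rfl)
  | k + 1 => by
      have ih := lucasV_main p A B m k
      have hD := D_congr p B m k
      have hcomp1 := lucasV_comp A B (p ^ (k + 1) * m) p
      rw [show p ^ (k + 1) * m * p = p ^ (k + 1 + 1) * m by ring] at hcomp1
      have hcomp2 := lucasV_comp A B (p ^ k * m) p
      rw [show p ^ k * m * p = p ^ (k + 1) * m by ring] at hcomp2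
      rw [hcomp2, hcomp1]
      exact lucasV_congr p ih hD (by omega)

theorem lucasV_padic (A B : ℤ) (p : ℕ) [Fact p.Prime] (hp2 : p ≠ 2) (n : ℕ) (hn : 0 < n) :
    ∃ z : ℤ_[p],
      ((lucasV A B (p * n) - lucasV A B n : ℤ) : ℤ_[p])
        = (p : ℤ_[p]) * (n : ℤ_[p]) * z := by
  set e := n.factorization p with he
  set u := n / p ^ e with hu'
  have hn0 : n ≠ 0 := hn.ne'
  have hfact : p ^ e * u = n := Nat.ordProj_mul_ordCompl_eq_self n p
  have hu : ¬ p ∣ u := Nat.not_dvd_ordCompl Fact.out hn0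
  have hmain := lucasV_main p A B u e
  rw [show p ^ (e + 1) * u = p * n by rw [← hfact]; ring, hfact] at hmain
  obtain ⟨c, hc⟩ := hmain
  have hnorm : ‖((u : ℤ) : ℤ_[p])‖ = 1 := by
    have h1 : ¬ ‖((u : ℤ) : ℤ_[p])‖ < 1 := by
      rw [PadicInt.norm_int_lt_one_iff_dvd]
      exact_mod_cast hu
    exact le_antisymm (PadicInt.norm_le_one _) (not_lt.1 h1)
  obtain ⟨v, hv⟩ := (PadicInt.isUnit_iff.2 hnorm).exists_right_inv
  refine ⟨(c : ℤ_[p]) * v, ?_⟩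
  rw [hc]
  have hncast : (n : ℤ_[p]) = (p : ℤ_[p]) ^ e * ((u : ℤ) : ℤ_[p]) := by
    rw [← hfact]; push_cast; ring
  rw [hncast]
  push_cast at hv ⊢
  linear_combination (-(p : ℤ_[p]) ^ (e + 1) * (c : ℤ_[p])) * hv
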